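/- The function τ = y²/r², expressed via the coordinates X, Y on the adjoint quotient of SL(2,C), is not a smooth (C¹) function of X and Y at the points (X,Y) = (±2,0). -/

import Mathlib

private lemma tau_circle (f : ℝ × ℝ → ℝ)
    (H : ∀ x y : ℝ, x ^ 2 + y ^ 2 ≠ 0 →
      f (x + x / (x ^ 2 + y ^ 2), y - y / (x ^ 2 + y ^ 2)) = y ^ 2 / (x ^ 2 + y ^ 2)) :
    ∀ t ∈ Set.Icc (-2:ℝ) 2, f (t, 0) = 1 - t ^ 2 / 4 := by
  intro t ht
  obtain ⟨ht1, ht2⟩ := ht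
  set x : ℝ := t / 2 with hx
  set y : ℝ := Real.sqrt (1 - (t / 2) ^ 2) with hy
  have hnn : 0 ≤ 1 - (t / 2) ^ 2 := by nlinarith
  have hy2 : y ^ 2 = 1 - (t / 2) ^ 2 := Real.sq_sqrt hnn
  have hr : x ^ 2 + y ^ 2 = 1 := by rw [hy2]; ring
  have h := H x y (by rw [hr]; norm_num)
  rw [hr] at h
  simp only [div_one] at h
  have e1 : x + x = t := by rw [hx]; ring
  rw [e1, sub_self] at h
  rw [h, hy2]; ring

private lemma tau_axis (f : ℝ × ℝ → ℝ)
    (H : ∀ x y : ℝ, x ^ 2 + y ^ 2 ≠ 0 →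
      f (x + x / (x ^ 2 + y ^ 2), y - y / (x ^ 2 + y ^ 2)) = y ^ 2 / (x ^ 2 + y ^ 2)) :
    ∀ x : ℝ, x ≠ 0 → f (x + 1 / x, 0) = 0 := by
  intro x hx
  have hx2 : x ^ 2 + (0:ℝ) ^ 2 ≠ 0 := by simpa using pow_ne_zero 2 hx
  have h := H x 0 hx2
  have e : x + x / (x ^ 2 + 0 ^ 2) = x + 1 / x := by field_simp; ring
  have e2 : (0:ℝ) - 0 / (x ^ 2 + 0 ^ 2) = 0 := by simp
  have e3 : (0:ℝ) ^ 2 / (x ^ 2 + 0 ^ 2) = 0 := by simp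
  rw [e, e2, e3] at h
  exact h

-- for |t| ≥ 2 there is x ≠ 0 with x + 1/x = t
private lemma exists_x (t : ℝ) (ht : 2 ≤ |t|) : ∃ x : ℝ, x ≠ 0 ∧ x + 1 / x = t := by
  have ht4 : 4 ≤ t ^ 2 := by
    have := sq_abs t
    nlinarith [sq_nonneg (|t| - 2)]
  set s := Real.sqrt (t ^ 2 - 4) with hs
  have hs2 : s ^ 2 = t ^ 2 - 4 := Real.sq_sqrt (by linarith)
  have hsnn : 0 ≤ s := Real.sqrt_nonneg _
  rcases le_or_gt 0 t with hpos | hneg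
  · have ht2 : 2 ≤ t := by rcases abs_cases t with ⟨h1, _⟩ | ⟨h1, _⟩ <;> linarith
    have hts : (0:ℝ) < t + s := by linarith
    refine ⟨(t + s) / 2, by positivity, ?_⟩
    field_simp [hts.ne']
    nlinarith
  · have ht2 : t ≤ -2 := by rcases abs_cases t with ⟨h1, _⟩ | ⟨h1, _⟩ <;> linarith
    have hts : t - s < 0 := by linarith
    refine ⟨(t - s) / 2, by exact div_ne_zero hts.ne (by norm_num), ?_⟩
    field_simp [hts.ne]
    nlinarith


private lemma g_axis (f : ℝ × ℝ → ℝ)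
    (H : ∀ x y : ℝ, x ^ 2 + y ^ 2 ≠ 0 →
      f (x + x / (x ^ 2 + y ^ 2), y - y / (x ^ 2 + y ^ 2)) = y ^ 2 / (x ^ 2 + y ^ 2)) :
    ∀ t : ℝ, 2 ≤ |t| → f (t, 0) = 0 := by
  intro t ht
  obtain ⟨x, hx, hxx⟩ := exists_x t ht
  rw [← hxx]
  exact tau_axis f H x hx

private lemma parab_deriv (a : ℝ) :
    HasDerivAt (fun t : ℝ => 1 - t ^ 2 / 4) (-(a / 2)) a := by
  have h1 : HasDerivAt (fun t : ℝ => t ^ 2) (2 * a) a := by simpa using hasDerivAt_pow 2 a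
  have h2 := (h1.div_const 4).const_sub 1
  rw [show -(a / 2) = -(2 * a / 4) by ring]; exact h2

/-- The function `τ = y²/r²` on the adjoint quotient of `SL(2,ℂ)`, expressed via
the coordinates `X = x + x/r²`, `Y = y - y/r²` (where `r² = x² + y²`), is not a
`C¹` function of `X` and `Y` at the two vertices `(X,Y) = (±2, 0)`: there is no
function of `(X,Y)` that is `C¹` at `(2,0)` (resp. `(-2,0)`) and agrees with `τ`
via the quotient map. -/
theorem tau_not_smooth_at_vertices :
    (¬ ∃ f : ℝ × ℝ → ℝ, ContDiffAt ℝ 1 f (2, 0) ∧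
      ∀ x y : ℝ, x ^ 2 + y ^ 2 ≠ 0 →
        f (x + x / (x ^ 2 + y ^ 2), y - y / (x ^ 2 + y ^ 2))
          = y ^ 2 / (x ^ 2 + y ^ 2)) ∧
    (¬ ∃ f : ℝ × ℝ → ℝ, ContDiffAt ℝ 1 f (-2, 0) ∧
      ∀ x y : ℝ, x ^ 2 + y ^ 2 ≠ 0 →
        f (x + x / (x ^ 2 + y ^ 2), y - y / (x ^ 2 + y ^ 2))
          = y ^ 2 / (x ^ 2 + y ^ 2)) := by
  constructor
  · rintro ⟨f, hf, H⟩
    set g : ℝ → ℝ := fun t => f (t, 0) with hgdef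
    have hg : DifferentiableAt ℝ g 2 :=
      (hf.differentiableAt one_ne_zero).comp 2 (differentiableAt_id.prodMk (differentiableAt_const 0))
    have hd : HasDerivAt g (deriv g 2) 2 := hg.hasDerivAt
    have hu1 : UniqueDiffWithinAt ℝ (Set.Icc (-2:ℝ) 2) 2 :=
      (uniqueDiffOn_Icc (by norm_num)).uniqueDiffWithinAt ⟨by norm_num, le_rfl⟩
    have hu2 : UniqueDiffWithinAt ℝ (Set.Icc (2:ℝ) 3) 2 :=
      (uniqueDiffOn_Icc (by norm_num)).uniqueDiffWithinAt ⟨le_rfl, by norm_num⟩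
    have hp : HasDerivAt (fun t : ℝ => 1 - t ^ 2 / 4) (-1) 2 := by
      have := parab_deriv 2; norm_num at this; exact this
    have hl : HasDerivWithinAt g (-1) (Set.Icc (-2:ℝ) 2) 2 :=
      hp.hasDerivWithinAt.congr (fun t ht => tau_circle f H t ht)
        (by simpa using tau_circle f H 2 ⟨by norm_num, le_rfl⟩)
    have hr : HasDerivWithinAt g 0 (Set.Icc (2:ℝ) 3) 2 :=
      (hasDerivAt_const (2:ℝ) (0:ℝ)).hasDerivWithinAt.congr
        (fun t ht => g_axis f H t (by rw [abs_of_nonneg (by linarith [ht.1] : (0:ℝ) ≤ t)]; exact ht.1))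
        (g_axis f H 2 (by norm_num))
    have e1 := hl.derivWithin hu1
    have e1' := hd.hasDerivWithinAt.derivWithin hu1
    have e2 := hr.derivWithin hu2
    have e2' := hd.hasDerivWithinAt.derivWithin hu2
    rw [e1'] at e1; rw [e2'] at e2
    rw [e1] at e2; norm_num at e2
  · rintro ⟨f, hf, H⟩
    set g : ℝ → ℝ := fun t => f (t, 0) with hgdef
    have hg : DifferentiableAt ℝ g (-2) :=
      (hf.differentiableAt one_ne_zero).comp (-2) (differentiableAt_id.prodMk (differentiableAt_const 0))
    have hd : HasDerivAt g (deriv g (-2)) (-2) := hg.hasDerivAt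
    have hu1 : UniqueDiffWithinAt ℝ (Set.Icc (-2:ℝ) 2) (-2) :=
      (uniqueDiffOn_Icc (by norm_num)).uniqueDiffWithinAt ⟨le_rfl, by norm_num⟩
    have hu2 : UniqueDiffWithinAt ℝ (Set.Icc (-3:ℝ) (-2)) (-2) :=
      (uniqueDiffOn_Icc (by norm_num)).uniqueDiffWithinAt ⟨by norm_num, le_rfl⟩
    have hp : HasDerivAt (fun t : ℝ => 1 - t ^ 2 / 4) (1) (-2) := by
      have := parab_deriv (-2); norm_num at this; exact this
    have hl : HasDerivWithinAt g 1 (Set.Icc (-2:ℝ) 2) (-2) :=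
      hp.hasDerivWithinAt.congr (fun t ht => tau_circle f H t ht)
        (by simpa using tau_circle f H (-2) ⟨le_rfl, by norm_num⟩)
    have hr : HasDerivWithinAt g 0 (Set.Icc (-3:ℝ) (-2)) (-2) :=
      (hasDerivAt_const (-2:ℝ) (0:ℝ)).hasDerivWithinAt.congr
        (fun t ht => g_axis f H t (by rw [abs_of_nonpos (by linarith [ht.2] : t ≤ 0)]; linarith [ht.2]))
        (g_axis f H (-2) (by norm_num))
    have e1 := hl.derivWithin hu1
    have e1' := hd.hasDerivWithinAt.derivWithin hu1
    have e2 := hr.derivWithin hu2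
    have e2' := hd.hasDerivWithinAt.derivWithin hu2
    rw [e1'] at e1; rw [e2'] at e2
    rw [e1] at e2; norm_num at e2
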